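/- Let C ⊆ ℕ^p be an integer cone, ⪯ an admissible total order on ℕ^p, f ∈ C \ {0}, and let S be a B-semigroup with respect to f such that S ≠ (C \ B(f)) ∪ {0}. Then S \ {α(S)} is again a B-semigroup with respect to f; in particular it is a C-semigroup with Frobenius element f. -/
import Mathlib


open Set BigOperators

/-- `C` is an integer cone: the intersection with `ℕ^p` of the set of nonnegative
real linear combinations of a finite set `A ⊆ ℕ^p`. -/
def IsIntegerCone (p : ℕ) (C : Set (Fin p → ℕ)) : Prop :=
  ∃ A : Finset (Fin p → ℕ),
    C = {x : Fin p → ℕ | ∃ l : (Fin p → ℕ) → ℝ,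
      (∀ a, 0 ≤ l a) ∧ ∀ i, (x i : ℝ) = ∑ a ∈ A, l a * (a i : ℝ)}

/-- An admissible total order on `ℕ^p`: total, compatible with addition,
with `0` minimum, and with finite down-sets. -/
structure AdmissibleOrder (p : ℕ) where
  le : (Fin p → ℕ) → (Fin p → ℕ) → Prop
  le_refl : ∀ x, le x x
  le_antisymm : ∀ x y, le x y → le y x → x = y
  le_trans : ∀ x y z, le x y → le y z → le x z
  le_total : ∀ x y, le x y ∨ le y x
  add_right : ∀ x y z, le x y → le (x + z) (y + z)
  zero_le : ∀ x, le 0 x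
  finite_le : ∀ f, {x : Fin p → ℕ | le x f}.Finite

/-- Strict version of an admissible order. -/
def AdmissibleOrder.lt {p : ℕ} (O : AdmissibleOrder p) (x y : Fin p → ℕ) : Prop :=
  O.le x y ∧ x ≠ y

/-- `S` is a `C`-semigroup: a submonoid of `ℕ^p` contained in `C` with finite complement in `C`. -/
def IsCSemigroup {p : ℕ} (C S : Set (Fin p → ℕ)) : Prop :=
  S ⊆ C ∧ 0 ∈ S ∧ (∀ x ∈ S, ∀ y ∈ S, x + y ∈ S) ∧ (C \ S).Finite

/-- `f` is the Frobenius element of `S`: the `⪯`-maximum of `C \ S`. -/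
def IsFrob {p : ℕ} (O : AdmissibleOrder p) (C S : Set (Fin p → ℕ)) (f : Fin p → ℕ) : Prop :=
  f ∈ C \ S ∧ ∀ x ∈ C \ S, O.le x f

/-- `B(f) = {x ∈ C : f - x ∈ C}`. -/
def BSet {p : ℕ} (C : Set (Fin p → ℕ)) (f : Fin p → ℕ) : Set (Fin p → ℕ) :=
  {x | x ∈ C ∧ ∃ y ∈ C, x + y = f}

/-- `N(f) = #{x ∈ C \ {0} : x ⪯ f}`. -/
noncomputable def NNum {p : ℕ} (O : AdmissibleOrder p) (C : Set (Fin p → ℕ)) (f : Fin p → ℕ) : ℕ :=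
  {x | x ∈ C ∧ x ≠ 0 ∧ O.le x f}.ncard

/-- The genus of `S`: the number of gaps `#(C \ S)`. -/
noncomputable def genusOf {p : ℕ} (C S : Set (Fin p → ℕ)) : ℕ := (C \ S).ncard

/-- The number of small elements `n(S) = #{s ∈ S : s ≺ Fb(S)}`; an element is smaller than
the Frobenius element iff it is strictly smaller than some gap. -/
noncomputable def smallCount {p : ℕ} (O : AdmissibleOrder p) (C S : Set (Fin p → ℕ)) : ℕ :=
  {s | s ∈ S ∧ ∃ h ∈ C \ S, O.lt s h}.ncard

/-- The minimal generating set of `S`. -/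
def msg {p : ℕ} (S : Set (Fin p → ℕ)) : Set (Fin p → ℕ) :=
  (S \ {0}) \ {x | ∃ a ∈ S \ {0}, ∃ b ∈ S \ {0}, a + b = x}

/-- `S` is a `B`-semigroup with respect to `f`. -/
def IsBSemigroup {p : ℕ} (O : AdmissibleOrder p) (C S : Set (Fin p → ℕ)) (f : Fin p → ℕ) : Prop :=
  IsCSemigroup C S ∧ IsFrob O C S f ∧ C \ BSet C f ⊆ S

/-- `a = α(S)`, the `⪯`-minimum of `(S \ {0}) ∩ B(f)`, with the convention `α(S) = f`
when `S ∩ B(f) = {0}`. -/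
def IsAlpha {p : ℕ} (O : AdmissibleOrder p) (C S : Set (Fin p → ℕ)) (f a : Fin p → ℕ) : Prop :=
  (a ∈ S ∧ a ≠ 0 ∧ a ∈ BSet C f ∧ ∀ x ∈ S, x ≠ 0 → x ∈ BSet C f → O.le a x)
  ∨ ((∀ x ∈ S ∩ BSet C f, x = 0) ∧ a = f)

/-- `x` is a special gap of `T`. -/
def SpecialGap {p : ℕ} (C T : Set (Fin p → ℕ)) (x : Fin p → ℕ) : Prop :=
  x ∈ C \ T ∧ x + x ∈ T ∧ ∀ t ∈ T, t ≠ 0 → x + t ∈ T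

/-- `l = λ(S)`, the `⪯`-largest gap of `S` lying outside `B(f)` (no convention case). -/
def IsLambdaGap {p : ℕ} (O : AdmissibleOrder p) (C S : Set (Fin p → ℕ)) (f l : Fin p → ℕ) : Prop :=
  l ∈ C \ S ∧ l ∉ BSet C f ∧ ∀ x ∈ C \ S, x ∉ BSet C f → O.le x l

/-- `l = λ(S)`, with the convention `λ(S) = 0` when `S` has no gap outside `B(f)`. -/
def IsLambda {p : ℕ} (O : AdmissibleOrder p) (C S : Set (Fin p → ℕ)) (f l : Fin p → ℕ) : Prop :=
  IsLambdaGap O C S f l ∨ ((∀ x ∈ C \ S, x ∈ BSet C f) ∧ l = 0)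

/-- `x ≤_C y` iff `y - x ∈ C`. -/
def leC {p : ℕ} (C : Set (Fin p → ℕ)) (x y : Fin p → ℕ) : Prop := ∃ d ∈ C, x + d = y

/-- The ordinary `C`-semigroup `S_c = {0} ∪ {x ∈ C : c ⪯ x}`. -/
def ordinarySemigroup {p : ℕ} (O : AdmissibleOrder p) (C : Set (Fin p → ℕ))
    (c : Fin p → ℕ) : Set (Fin p → ℕ) :=
  insert 0 {x | x ∈ C ∧ O.le c x}

/-- `S` is an arf semigroup in `C`. -/
def ArfSemigroup {p : ℕ} (C S : Set (Fin p → ℕ)) : Prop :=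
  ∀ x ∈ S, ∀ y ∈ S, ∀ z ∈ S, leC C z y → leC C y x →
    ∀ w : Fin p → ℕ, w + z = x + y → w ∈ S

/-- `S` is a saturated semigroup in `C`: whenever `s, s₁, …, s_r ∈ S` with `s_i ≤_C s`,
and `z : Fin r → ℤ` with `z₁s₁ + ⋯ + z_rs_r ∈ C` (as an element `t` of `ℕ^p`),
then `s + z₁s₁ + ⋯ + z_rs_r = s + t ∈ S`. -/
def SaturatedSemigroup {p : ℕ} (C S : Set (Fin p → ℕ)) : Prop :=
  ∀ (r : ℕ) (s : Fin p → ℕ) (si : Fin r → (Fin p → ℕ)) (z : Fin r → ℤ),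
    s ∈ S → (∀ i, si i ∈ S) → (∀ i, leC C (si i) s) →
    ∀ t ∈ C, (∀ j, (t j : ℤ) = ∑ i, z i * (si i j : ℤ)) → s + t ∈ S

/-- If S is a B-semigroup with respect to f and S ≠ (C \ B(f)) ∪ {0}, then S \ {α(S)}
is again a B-semigroup with respect to f. -/
lemma cone_add' (p : ℕ) (C : Set (Fin p → ℕ)) (hC : IsIntegerCone p C) :
    ∀ x ∈ C, ∀ y ∈ C, x + y ∈ C := by
  obtain ⟨A, rfl⟩ := hC
  rintro x ⟨l, hl, hx⟩ y ⟨m, hm, hy⟩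
  refine ⟨fun a => l a + m a, fun a => add_nonneg (hl a) (hm a), fun i => ?_⟩
  simp only [Pi.add_apply, Nat.cast_add, hx i, hy i, add_mul, Finset.sum_add_distrib]

theorem statement4 (p : ℕ) (hp : 0 < p) (C : Set (Fin p → ℕ)) (hC : IsIntegerCone p C)
    (O : AdmissibleOrder p) (f : Fin p → ℕ) (hfC : f ∈ C) (hf0 : f ≠ 0)
    (S : Set (Fin p → ℕ)) (hS : IsBSemigroup O C S f)
    (hne : S ≠ (C \ BSet C f) ∪ {0})
    (a : Fin p → ℕ) (ha : IsAlpha O C S f a) :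
    IsBSemigroup O C (S \ {a}) f := by
  obtain ⟨⟨hSsubC, h0S, hadd, hfin⟩, hFrob, hBsub⟩ := hS
  have ha' : a ∈ S ∧ a ≠ 0 ∧ a ∈ BSet C f ∧
      ∀ x ∈ S, x ≠ 0 → x ∈ BSet C f → O.le a x := by
    rcases ha with h | ⟨h, rfl⟩
    · exact h
    · exfalso
      apply hne
      ext x
      constructor
      · intro hx
        by_cases hx0 : x = 0
        · exact Or.inr hx0
        · exact Or.inl ⟨hSsubC hx, fun hb => hx0 (h x ⟨hx, hb⟩)⟩
      · rintro (hx | rfl)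
        · exact hBsub hx
        · exact h0S
  obtain ⟨haS, ha0, haB, hamin⟩ := ha'
  obtain ⟨haC, c, hcC, hac⟩ := haB
  have Cadd := cone_add' p C hC
  have haf : O.le a f := by
    have := O.add_right 0 c a (O.zero_le c)
    simpa [add_comm, hac] using this
  refine ⟨⟨fun x hx => hSsubC hx.1, ⟨h0S, by simpa using Ne.symm ha0⟩, ?_, ?_⟩,
    ⟨⟨hfC, fun hfS => hFrob.1.2 hfS.1⟩, ?_⟩, ?_⟩
  · rintro x ⟨hxS, hxa⟩ y ⟨hyS, hya⟩
    refine ⟨hadd x hxS y hyS, ?_⟩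
    simp only [Set.mem_singleton_iff] at hxa hya ⊢
    intro hxy
    by_cases hx0 : x = 0
    · exact hya (by simpa [hx0] using hxy)
    by_cases hy0 : y = 0
    · exact hxa (by simpa [hy0] using hxy)
    have hxB : x ∈ BSet C f := by
      refine ⟨hSsubC hxS, y + c, Cadd y (hSsubC hyS) c hcC, ?_⟩
      rw [← add_assoc, hxy, hac]
    have h1 : O.le a x := hamin x hxS hx0 hxB
    have h2 : O.le x a := by
      have := O.add_right 0 y x (O.zero_le y)
      simpa [add_comm, hxy] using this
    have hxaeq : x = a := O.le_antisymm x a h2 h1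
    apply hy0
    have : x + y = x + 0 := by rw [hxy, hxaeq, add_zero]
    exact add_left_cancel this
  · refine ((hfin.union (Set.finite_singleton a)).subset ?_)
    rintro x ⟨hxC, hx⟩
    by_cases hxa : x = a
    · exact Or.inr hxa
    · exact Or.inl ⟨hxC, fun hxS => hx ⟨hxS, hxa⟩⟩
  · rintro x ⟨hxC, hx⟩
    by_cases hxa : x = a
    · exact hxa ▸ haf
    · exact hFrob.2 x ⟨hxC, fun hxS => hx ⟨hxS, hxa⟩⟩
  · rintro x hx
    refine ⟨hBsub hx, ?_⟩
    simp only [Set.mem_singleton_iff]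
    rintro rfl
    exact hx.2 ⟨haC, c, hcC, hac⟩
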